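/- An operator algebra A has the total reduction property if and only if for every continuous representation θ : A → B(H), every continuous derivation δ : A → B(H) (with respect to the bimodule structure a·T·b = θ(a)Tθ(b)) is inner, i.e. there exists T ∈ B(H) with δ(a) = θ(a)T − Tθ(a) for all a. -/

import Mathlib

set_option synthInstance.maxHeartbeats 1000000
set_option maxHeartbeats 1000000

universe u

section RingLemmas
variable {R : Type*} [Ring R]

variable {R : Type*} [Ring R]

lemma ringKey_mul (p q x y : R)
    (hp : p * p = p) (hq : q * q = q) (hpq : p * q = 0) (hqp : q * p = 0)
    (hsum : p + q = 1) (hx : q * (x * p) = 0) (hy : q * (y * p) = 0) :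
    p * (x * y) * p + q * (x * y) * q
      = (p * x * p + q * x * q) * (p * y * p + q * y * q) := by
  have hp' : ∀ z, p * (p * z) = p * z := fun z => by rw [← mul_assoc, hp]
  have hq' : ∀ z, q * (q * z) = q * z := fun z => by rw [← mul_assoc, hq]
  have hpq' : ∀ z, p * (q * z) = 0 := fun z => by rw [← mul_assoc, hpq, zero_mul]
  have hqp' : ∀ z, q * (p * z) = 0 := fun z => by rw [← mul_assoc, hqp, zero_mul]
  have hx' : ∀ z, q * (x * (p * z)) = 0 := fun z => by
    rw [← mul_assoc x p z, ← mul_assoc, hx, zero_mul]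
  have hy' : ∀ z, q * (y * (p * z)) = 0 := fun z => by
    rw [← mul_assoc y p z, ← mul_assoc, hy, zero_mul]
  have hins : x * y = x * (p + q) * y := by rw [hsum, mul_one]
  rw [hins]
  simp only [mul_add, add_mul, mul_assoc, hp', hq', hpq', hqp', hx', hy', hx, hy,
    hp, hq, hpq, hqp, mul_zero, zero_mul, add_zero, zero_add]

lemma ringKey_der (p q x y : R)
    (hp : p * p = p) (hq : q * q = q) (hpq : p * q = 0) (hqp : q * p = 0)
    (hsum : p + q = 1) (hx : q * (x * p) = 0) (hy : q * (y * p) = 0) :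
    p * (x * y) * q
      = (p * x * p + q * x * q) * (p * y * q) + (p * x * q) * (p * y * p + q * y * q) := by
  have hp' : ∀ z, p * (p * z) = p * z := fun z => by rw [← mul_assoc, hp]
  have hq' : ∀ z, q * (q * z) = q * z := fun z => by rw [← mul_assoc, hq]
  have hpq' : ∀ z, p * (q * z) = 0 := fun z => by rw [← mul_assoc, hpq, zero_mul]
  have hqp' : ∀ z, q * (p * z) = 0 := fun z => by rw [← mul_assoc, hqp, zero_mul]
  have hx' : ∀ z, q * (x * (p * z)) = 0 := fun z => by
    rw [← mul_assoc x p z, ← mul_assoc, hx, zero_mul]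
  have hy' : ∀ z, q * (y * (p * z)) = 0 := fun z => by
    rw [← mul_assoc y p z, ← mul_assoc, hy, zero_mul]
  have hins : x * y = x * (p + q) * y := by rw [hsum, mul_one]
  rw [hins]
  simp only [mul_add, add_mul, mul_assoc, hp', hq', hpq', hqp', hx', hy', hx, hy,
    hp, hq, hpq, hqp, mul_zero, zero_mul, add_zero, zero_add]

lemma ringKey_comm (p q x t : R)
    (hp : p * p = p) (hq : q * q = q) (hpq : p * q = 0) (hqp : q * p = 0)
    (hsum : p + q = 1) (hx : q * (x * p) = 0)
    (hT : p * x * q = (p * x * p + q * x * q) * t - t * (p * x * p + q * x * q)) :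
    (p + p * t * q) * x = x * (p + p * t * q) := by
  have hp' : ∀ z, p * (p * z) = p * z := fun z => by rw [← mul_assoc, hp]
  have hq' : ∀ z, q * (q * z) = q * z := fun z => by rw [← mul_assoc, hq]
  have hpq' : ∀ z, p * (q * z) = 0 := fun z => by rw [← mul_assoc, hpq, zero_mul]
  have hqp' : ∀ z, q * (p * z) = 0 := fun z => by rw [← mul_assoc, hqp, zero_mul]
  have hx' : ∀ z, q * (x * (p * z)) = 0 := fun z => by
    rw [← mul_assoc x p z, ← mul_assoc, hx, zero_mul]
  have hins : x = (p + q) * x * (p + q) := by rw [hsum, one_mul, mul_one]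
  have hT2 := congrArg (fun z => p * z * q) hT
  simp only [mul_add, add_mul, mul_assoc, hp', hq', hpq', hqp', hx', hx,
    hp, hq, hpq, hqp, mul_zero, zero_mul, add_zero, zero_add, sub_mul, mul_sub] at hT2
  rw [hins]
  simp only [mul_add, add_mul, mul_assoc, hp', hq', hpq', hqp', hx', hx,
    hp, hq, hpq, hqp, mul_zero, zero_mul, add_zero, zero_add]
  rw [hT2]
  abel
end RingLemmas

/-- an operator algebra (here, a Banach algebra) `A` has the total reduction
property iff for every continuous representation `θ : A → B(H)` every continuous derivation
`δ : A → B(H)` (for the bimodule action `a·T·b = θ(a) T θ(b)`) is inner. -/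
theorem totalReduction_iff_derivations_inner
    {A : Type u} [NormedRing A] [NormedAlgebra ℂ A] [CompleteSpace A] :
    (∀ (H : Type u) [NormedAddCommGroup H] [InnerProductSpace ℂ H] [CompleteSpace H],
      ∀ θ : A →ₐ[ℂ] (H →L[ℂ] H), Continuous (⇑θ) →
      ∀ V : Submodule ℂ H, IsClosed (V : Set H) → (∀ a : A, ∀ x ∈ V, θ a x ∈ V) →
      ∃ W : Submodule ℂ H, IsClosed (W : Set H) ∧ (∀ a : A, ∀ x ∈ W, θ a x ∈ W) ∧
        V ⊓ W = ⊥ ∧ V ⊔ W = ⊤)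
    ↔
    (∀ (H : Type u) [NormedAddCommGroup H] [InnerProductSpace ℂ H] [CompleteSpace H],
      ∀ θ : A →ₐ[ℂ] (H →L[ℂ] H), Continuous (⇑θ) →
      ∀ δ : A →ₗ[ℂ] (H →L[ℂ] H), Continuous (⇑δ) →
      (∀ a b : A, δ (a * b) = θ a * δ b + δ a * θ b) →
      ∃ T : H →L[ℂ] H, ∀ a : A, δ a = θ a * T - T * θ a) := by
  constructor
  · intro htr H _ _ _ θ hθ δ hδ hder
    classical
    have hδ1 : δ 1 = 0 := by
      have h := hder 1 1
      rw [one_mul, map_one θ, one_mul, mul_one] at h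
      have h2 : δ 1 + 0 = δ 1 + δ 1 := by rw [add_zero]; exact h
      exact (add_left_cancel h2).symm
    set H' := WithLp 2 (H × H) with hH'
    let e : H' ≃L[ℂ] H × H := WithLp.prodContinuousLinearEquiv 2 ℂ H H
    -- the operator matrix [[θ a, δ a], [0, θ a]]
    let M : A → ((H × H) →L[ℂ] (H × H)) := fun a =>
      (ContinuousLinearMap.inl ℂ H H).comp
          ((θ a).comp (ContinuousLinearMap.fst ℂ H H) + (δ a).comp (ContinuousLinearMap.snd ℂ H H))
        + (ContinuousLinearMap.inr ℂ H H).comp ((θ a).comp (ContinuousLinearMap.snd ℂ H H))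
    have hM : ∀ a (w : H × H), M a w = (θ a w.1 + δ a w.2, θ a w.2) := by
      intro a w
      simp [M, Prod.ext_iff]
    have hMcont : Continuous M := by
      apply Continuous.add
      · exact continuous_const.clm_comp ((hθ.clm_comp continuous_const).add
          (hδ.clm_comp continuous_const))
      · exact continuous_const.clm_comp (hθ.clm_comp continuous_const)
    let ρlin : A →ₗ[ℂ] (H' →L[ℂ] H') :=
      { toFun := fun a =>
          (e.symm.toContinuousLinearMap.comp (M a)).comp e.toContinuousLinearMap
        map_add' := fun a b => by
          refine ContinuousLinearMap.ext fun z => ?_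
          simp only [ContinuousLinearMap.coe_comp', Function.comp_apply,
            ContinuousLinearEquiv.coe_coe, ContinuousLinearMap.add_apply, map_add, hM]
          rw [← map_add]
          congr 1
          simp only [Prod.mk_add_mk, Prod.mk.injEq]
          exact ⟨by abel, trivial⟩
        map_smul' := fun c a => by
          refine ContinuousLinearMap.ext fun z => ?_
          simp only [ContinuousLinearMap.coe_comp', Function.comp_apply,
            ContinuousLinearEquiv.coe_coe, ContinuousLinearMap.coe_smul', Pi.smul_apply,
            map_smul, hM]
          rw [← smul_add, ← Prod.smul_mk, map_smul, RingHom.id_apply] }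
    have hρap : ∀ a (z : H'), ρlin a z = e.symm (M a (e z)) := fun a z => rfl
    have hρmul : ∀ a b, ρlin (a * b) = ρlin a * ρlin b := by
      intro a b
      refine ContinuousLinearMap.ext fun z => ?_
      rw [ContinuousLinearMap.mul_apply, hρap, hρap, hρap, e.apply_symm_apply]
      congr 1
      rw [hM, hM, hM]
      refine Prod.ext ?_ ?_
      · simp only [map_mul, ContinuousLinearMap.mul_apply, hder, ContinuousLinearMap.add_apply]
        simp [map_add]
        abel
      · simp [map_mul]
    let ρ : A →ₐ[ℂ] (H' →L[ℂ] H') := AlgHom.ofLinearMap ρlin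
      (by
        refine ContinuousLinearMap.ext fun z => ?_
        rw [hρap, hM, ContinuousLinearMap.one_apply]
        simp [hδ1]) hρmul
    have hρap' : ∀ a (z : H'), ρ a z = e.symm (M a (e z)) := hρap
    have hρ : Continuous (⇑ρ) := by
      show Continuous fun a =>
        (e.symm.toContinuousLinearMap.comp (M a)).comp e.toContinuousLinearMap
      exact (continuous_const.clm_comp hMcont).clm_comp continuous_const
    let s2 : H' →L[ℂ] H := (ContinuousLinearMap.snd ℂ H H).comp e.toContinuousLinearMap
    have hs2 : ∀ z : H', s2 z = (e z).2 := fun z => rfl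
    set V' : Submodule ℂ H' := LinearMap.ker (s2 : H' →ₗ[ℂ] H) with hV'def
    have hV'mem : ∀ z : H', z ∈ V' ↔ (e z).2 = 0 := fun z => by
      rw [hV'def, LinearMap.mem_ker, ContinuousLinearMap.coe_coe, hs2]
    have hV'c : IsClosed (V' : Set H') := ContinuousLinearMap.isClosed_ker s2
    have hV'inv : ∀ a : A, ∀ z ∈ V', ρ a z ∈ V' := by
      intro a z hz
      rw [hV'mem] at hz ⊢
      rw [hρap', e.apply_symm_apply, hM]
      simp [hz]
    obtain ⟨W, hWc, hWinv, hinf, hsup⟩ := htr H' ρ hρ V' hV'c hV'inv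
    have hc : IsCompl V' W := ⟨disjoint_iff.mpr hinf, codisjoint_iff.mpr hsup⟩
    let F : H' →L[ℂ] H' := V'.subtypeL.comp (V'.linearProjOfClosedCompl W hc hV'c hWc)
    have hF3 : ∀ z, F z ∈ V' := fun z => ((V'.linearProjOfClosedCompl W hc hV'c hWc) z).2
    have hFapp : ∀ z, F z = (Submodule.linearProjOfIsCompl V' W hc z : H') := fun z => rfl
    have hF1 : ∀ z ∈ V', F z = z := by
      intro z hz
      rw [hFapp]
      exact congrArg Subtype.val (Submodule.linearProjOfIsCompl_apply_left hc ⟨z, hz⟩)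
    have hF2 : ∀ z ∈ W, F z = 0 := by
      intro z hz
      rw [hFapp, show (V'.linearProjOfIsCompl W hc) z = 0 from
        Submodule.linearProjOfIsCompl_apply_right' hc hz]
      rfl
    have hcommF : ∀ a (z : H'), F (ρ a z) = ρ a (F z) := by
      intro a z
      have hzsup : z ∈ V' ⊔ W := by rw [hsup]; exact Submodule.mem_top
      obtain ⟨v, hv, w, hw, rfl⟩ := Submodule.mem_sup.mp hzsup
      calc F (ρ a (v + w)) = F (ρ a v) + F (ρ a w) := by rw [map_add, map_add]
        _ = ρ a v := by rw [hF1 _ (hV'inv a v hv), hF2 _ (hWinv a w hw), add_zero]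
        _ = ρ a (F (v + w)) := by rw [map_add, hF1 v hv, hF2 w hw, add_zero]
    let τ : H →L[ℂ] H := (ContinuousLinearMap.fst ℂ H H).comp
      (e.toContinuousLinearMap.comp
        (F.comp (e.symm.toContinuousLinearMap.comp (ContinuousLinearMap.inr ℂ H H))))
    have hτ : ∀ u : H, τ u = (e (F (e.symm (0, u)))).1 := fun u => rfl
    have hFV : ∀ z, e (F z) = ((e (F z)).1, 0) := fun z =>
      Prod.ext rfl ((hV'mem (F z)).mp (hF3 z))
    have hFinr : ∀ u : H, F (e.symm (0, u)) = e.symm (τ u, 0) := fun u => by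
      conv_lhs => rw [← e.symm_apply_apply (F (e.symm (0, u)))]
      rw [hFV, ← hτ]
    have hmemx : ∀ x : H, e.symm ((x, 0) : H × H) ∈ V' := fun x =>
      (hV'mem _).mpr (by rw [e.apply_symm_apply])
    have key : ∀ a (y : H), δ a y + τ (θ a y) = θ a (τ y) := by
      intro a y
      have hz := hcommF a (e.symm (0, y))
      rw [hρap', e.apply_symm_apply, hM, hFinr, hρap', e.apply_symm_apply, hM] at hz
      simp only [map_zero, add_zero, zero_add] at hz
      have hsplit : (e.symm ((δ a y, θ a y) : H × H))
          = e.symm ((δ a y, 0) : H × H) + e.symm ((0, θ a y) : H × H) := by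
        rw [← map_add, Prod.mk_add_mk, add_zero, zero_add]
      rw [hsplit, map_add, hFinr, hF1 _ (hmemx (δ a y)), ← map_add, Prod.mk_add_mk,
        add_zero] at hz
      exact congrArg Prod.fst (e.symm.injective hz)
    refine ⟨τ, fun a => ?_⟩
    ext y
    rw [ContinuousLinearMap.sub_apply, ContinuousLinearMap.mul_apply,
      ContinuousLinearMap.mul_apply, eq_sub_iff_add_eq]
    exact key a y
  · intro hinner H _ _ _ θ hθ V hVc hVinv
    haveI : CompleteSpace V := hVc.completeSpace_coe
    set P : H →L[ℂ] H := V.subtypeL.comp (V.orthogonalProjectionOnto) with hPdef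
    have hPmem : ∀ x, P x ∈ V := fun x => (V.orthogonalProjectionOnto x).2
    have hPid : ∀ x ∈ V, P x = x := fun x hx => (Submodule.starProjection_eq_self_iff (K := V)).mpr hx
    have hp : P * P = P := by
      ext x
      exact hPid _ (hPmem x)
    set Q : H →L[ℂ] H := 1 - P with hQdef
    have hsum : P + Q = 1 := by rw [hQdef, add_sub_cancel]
    have hpq : P * Q = 0 := by rw [hQdef, mul_sub, mul_one, hp, sub_self]
    have hqp : Q * P = 0 := by rw [hQdef, sub_mul, one_mul, hp, sub_self]
    have hq : Q * Q = Q := by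
      rw [hQdef, sub_mul, one_mul, mul_sub, mul_one, hp, sub_self, sub_zero]
    have hQ0 : ∀ x ∈ V, Q x = 0 := fun x hx => by
      rw [hQdef, ContinuousLinearMap.sub_apply, ContinuousLinearMap.one_apply, hPid x hx,
        sub_self]
    have hx : ∀ a, Q * (θ a * P) = 0 := fun a => by
      ext x
      rw [ContinuousLinearMap.mul_apply, ContinuousLinearMap.mul_apply,
        ContinuousLinearMap.zero_apply]
      exact hQ0 _ (hVinv a _ (hPmem x))
    -- the compressed representation ρ
    let ρlin : A →ₗ[ℂ] (H →L[ℂ] H) :=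
      { toFun := fun a => P * θ a * P + Q * θ a * Q
        map_add' := fun a b => by
          simp only [map_add, mul_add, add_mul]
          abel
        map_smul' := fun c a => by
          simp only [map_smul, RingHom.id_apply, smul_add, mul_smul_comm, smul_mul_assoc] }
    have hmul : ∀ a b : A, ρlin (a * b) = ρlin a * ρlin b := fun a b => by
      show P * θ (a * b) * P + Q * θ (a * b) * Q = _
      rw [map_mul θ]
      exact ringKey_mul P Q (θ a) (θ b) hp hq hpq hqp hsum (hx a) (hx b)
    let ρ : A →ₐ[ℂ] (H →L[ℂ] H) := AlgHom.ofLinearMap ρlin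
      (by show P * θ 1 * P + Q * θ 1 * Q = 1
          rw [map_one, mul_one, mul_one, hp, hq, hsum]) hmul
    have hρ : Continuous (⇑ρ) := by
      show Continuous fun a => P * θ a * P + Q * θ a * Q
      exact ((continuous_const.mul hθ).mul continuous_const).add
        ((continuous_const.mul hθ).mul continuous_const)
    -- the derivation δ'
    let δ' : A →ₗ[ℂ] (H →L[ℂ] H) :=
      { toFun := fun a => P * θ a * Q
        map_add' := fun a b => by simp only [map_add, mul_add, add_mul]
        map_smul' := fun c a => by
          simp only [map_smul, RingHom.id_apply, mul_smul_comm, smul_mul_assoc] }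
    have hδ' : Continuous (⇑δ') := by
      show Continuous fun a => P * θ a * Q
      exact (continuous_const.mul hθ).mul continuous_const
    have hder : ∀ a b : A, δ' (a * b) = ρ a * δ' b + δ' a * ρ b := fun a b => by
      show P * θ (a * b) * Q = (P * θ a * P + Q * θ a * Q) * (P * θ b * Q)
        + (P * θ a * Q) * (P * θ b * P + Q * θ b * Q)
      rw [map_mul θ]
      exact ringKey_der P Q (θ a) (θ b) hp hq hpq hqp hsum (hx a) (hx b)
    obtain ⟨T, hT⟩ := hinner H ρ hρ δ' hδ' hder
    set E : H →L[ℂ] H := P + P * T * Q with hEdef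
    have hcomm : ∀ a, E * θ a = θ a * E := fun a =>
      ringKey_comm P Q (θ a) T hp hq hpq hqp hsum (hx a) (hT a)
    have hcommx : ∀ a x, E (θ a x) = θ a (E x) := fun a x => by
      have := ContinuousLinearMap.ext_iff.mp (hcomm a) x
      rwa [ContinuousLinearMap.mul_apply, ContinuousLinearMap.mul_apply] at this
    have hEV : ∀ x, E x ∈ V := fun x => by
      rw [hEdef, ContinuousLinearMap.add_apply, ContinuousLinearMap.mul_apply,
        ContinuousLinearMap.mul_apply]
      exact V.add_mem (hPmem x) (hPmem _)
    have hEid : ∀ x ∈ V, E x = x := fun x hxV => by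
      rw [hEdef, ContinuousLinearMap.add_apply, ContinuousLinearMap.mul_apply,
        ContinuousLinearMap.mul_apply, hQ0 x hxV, map_zero, map_zero, add_zero, hPid x hxV]
    refine ⟨LinearMap.ker (E : H →ₗ[ℂ] H), ContinuousLinearMap.isClosed_ker E, ?_, ?_, ?_⟩
    · intro a x hxk
      rw [LinearMap.mem_ker, ContinuousLinearMap.coe_coe] at hxk ⊢
      rw [hcommx a x, hxk, map_zero]
    · rw [eq_bot_iff]
      intro x hx
      obtain ⟨hx1, hx2⟩ := Submodule.mem_inf.mp hx
      rw [LinearMap.mem_ker, ContinuousLinearMap.coe_coe] at hx2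
      have : x = 0 := by rw [← hEid x hx1, hx2]
      simpa using this
    · rw [eq_top_iff]
      intro x _
      have hk : x - E x ∈ LinearMap.ker (E : H →ₗ[ℂ] H) := by
        rw [LinearMap.mem_ker, ContinuousLinearMap.coe_coe, map_sub, hEid (E x) (hEV x), sub_self]
      exact Submodule.mem_sup.mpr ⟨E x, hEV x, x - E x, hk, by abel⟩
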